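/- Consider the 3-color FCA on a path of four vertices {0,1,2,3} with update rule X_{t+1}(v) = X_t(v) if X_t(v) = 2 and some path-neighbor has color 1, else X_t(v)+1 mod 3. Let X_0 be uniformly distributed on (ℤ_3)^4 (81 equally likely colorings) and define g(X_0) = X_1(2) − X_1(1), where the difference of the time-1 colors is coded as the representative in {−2,−1,0,1,2} given by the signed color differential as in the FCA particle system. Then E[g] = 0 and E[g²] = 40/81. -/
import Mathlib


open scoped BigOperators

/-- One synchronous step of the 3-color FCA on the path `0 – 1 – 2 – 3`. -/
def fcaStep4 (c : Fin 4 → ZMod 3) : Fin 4 → ZMod 3 := fun v =>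
  if c v = 2 ∧ (∃ u : Fin 4, ((u : ℕ) + 1 = (v : ℕ) ∨ (v : ℕ) + 1 = (u : ℕ)) ∧ c u = 1)
  then c v else c v + 1

/-- The representative in `{-1,0,1} ⊆ ℝ` of an element of `ℤ₃`. -/
def code3 (z : ZMod 3) : ℝ := if z = 0 then 0 else if z = 1 then 1 else -1

/-- The FCA edge increment `g(X₀) = dX₁(1,2)`: the coded color differential of
the middle two sites after one synchronous FCA update of the path of four. -/
noncomputable def g11 (c : Fin 4 → ZMod 3) : ℝ :=
  code3 (fcaStep4 c 2 - fcaStep4 c 1)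

def code3Int (z : ZMod 3) : ℤ := if z = 0 then 0 else if z = 1 then 1 else -1

def g11Int (c : Fin 4 → ZMod 3) : ℤ := code3Int (fcaStep4 c 2 - fcaStep4 c 1)

lemma g11_eq (c : Fin 4 → ZMod 3) : g11 c = (g11Int c : ℝ) := by
  unfold g11 g11Int code3 code3Int
  split_ifs <;> norm_num

set_option maxRecDepth 10000 in
lemma sum1 : (∑ c : Fin 4 → ZMod 3, g11Int c) = 0 := by decide
set_option maxRecDepth 10000 in
lemma sum2 : (∑ c : Fin 4 → ZMod 3, (g11Int c) ^ 2) = 40 := by decide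

/-- with `X₀` uniform on the `81` colorings of the path of four,
the FCA increment `g = dX₁(1,2)` satisfies `E[g] = 0` and `E[g²] = 40/81`. -/
theorem stmt_11 :
    (∑ c : Fin 4 → ZMod 3, g11 c) / 81 = 0 ∧
    (∑ c : Fin 4 → ZMod 3, (g11 c) ^ 2) / 81 = 40 / 81 := by
  constructor
  · have : (∑ c : Fin 4 → ZMod 3, g11 c) = ((∑ c : Fin 4 → ZMod 3, g11Int c : ℤ) : ℝ) := by
      push_cast; exact Finset.sum_congr rfl fun c _ => g11_eq c
    rw [this, sum1]; norm_num
  · have : (∑ c : Fin 4 → ZMod 3, (g11 c) ^ 2)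
        = ((∑ c : Fin 4 → ZMod 3, (g11Int c) ^ 2 : ℤ) : ℝ) := by
      push_cast; exact Finset.sum_congr rfl fun c _ => by rw [g11_eq]
    rw [this, sum2]; norm_num
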